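/- Let Γ be the set of absolutely continuous γ : [0,1] → [0,1] with γ(0)=0, γ(1)=1, and γ' ≥ 0 a.e., and let Γ₀ ⊂ Γ consist of those γ with γ' > 0 a.e. Then Γ is closed under composition, Γ₀ is a group under composition (each γ ∈ Γ₀ has inverse γ⁻¹ ∈ Γ₀), and for γ ∈ Γ₀ the inverse satisfies (γ⁻¹)' = 1/(γ' ∘ γ⁻¹) a.e. on [0,1]. -/

import Mathlib

open MeasureTheory Set

/-- `f` is absolutely continuous on `[a,b]` (standard ε–δ definition). -/
def AbsolutelyContinuousOn (f : ℝ → ℝ) (a b : ℝ) : Prop :=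
  ∀ ε > (0:ℝ), ∃ δ > (0:ℝ), ∀ n : ℕ, ∀ x y : Fin n → ℝ,
    (∀ i, a ≤ x i ∧ x i ≤ y i ∧ y i ≤ b) →
    (∀ i j, i ≠ j → Disjoint (Ioo (x i) (y i)) (Ioo (x j) (y j))) →
    ∑ i, (y i - x i) < δ → ∑ i, |f (y i) - f (x i)| < ε

/-- The class `Γ` of warping functions: absolutely continuous `γ : [0,1] → [0,1]` with
`γ 0 = 0`, `γ 1 = 1` and derivative (existing a.e.) nonnegative a.e. -/
def InGamma (γ : ℝ → ℝ) : Prop :=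
  AbsolutelyContinuousOn γ 0 1 ∧ MapsTo γ (Icc (0:ℝ) 1) (Icc (0:ℝ) 1) ∧
  γ 0 = 0 ∧ γ 1 = 1 ∧
  ∀ᵐ t ∂(volume.restrict (Icc (0:ℝ) 1)),
    ∃ d : ℝ, HasDerivWithinAt γ d (Icc (0:ℝ) 1) t ∧ 0 ≤ d

/-- The subclass `Γ₀ ⊆ Γ` of invertible warping functions: those with a.e. positive
derivative. -/
def InGamma0 (γ : ℝ → ℝ) : Prop :=
  InGamma γ ∧
  ∀ᵐ t ∂(volume.restrict (Icc (0:ℝ) 1)),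
    ∃ d : ℝ, HasDerivWithinAt γ d (Icc (0:ℝ) 1) t ∧ 0 < d

namespace GammaAux

/-! ### basic plumbing -/

lemma null_of_ae_restrict {p : ℝ → Prop}
    (h : ∀ᵐ t ∂(volume.restrict (Icc (0:ℝ) 1)), p t) :
    volume {t | t ∈ Icc (0:ℝ) 1 ∧ ¬ p t} = 0 := by
  rw [MeasureTheory.ae_iff] at h
  rw [Measure.restrict_apply' measurableSet_Icc] at h
  have : {t | t ∈ Icc (0:ℝ) 1 ∧ ¬ p t} = {a | ¬ p a} ∩ Icc 0 1 := by
    ext t; simp [and_comm]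
  rw [this]; exact h

lemma ae_restrict_of_null {p : ℝ → Prop}
    (h : volume {t | t ∈ Icc (0:ℝ) 1 ∧ ¬ p t} = 0) :
    ∀ᵐ t ∂(volume.restrict (Icc (0:ℝ) 1)), p t := by
  rw [MeasureTheory.ae_iff, Measure.restrict_apply' measurableSet_Icc]
  have : {a | ¬ p a} ∩ Icc 0 1 = {t | t ∈ Icc (0:ℝ) 1 ∧ ¬ p t} := by
    ext t; simp [and_comm]
  rw [this]; exact h

lemma ae_restrict_mem_Ioo :
    ∀ᵐ t ∂(volume.restrict (Icc (0:ℝ) 1)), t ∈ Ioo (0:ℝ) 1 := by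
  apply ae_restrict_of_null
  refine measure_mono_null ?_
    ((Set.finite_singleton (1:ℝ) |>.insert 0).measure_zero _)
  intro t ⟨ht, ht'⟩
  simp only [mem_Icc] at ht
  simp only [mem_Ioo, not_and_or, not_lt] at ht'
  simp only [mem_insert_iff, mem_singleton_iff]
  rcases ht' with h | h
  · left; linarith
  · right; linarith

lemma Monotone.hasDerivAt_nonneg {f : ℝ → ℝ} {d t : ℝ} (hf : Monotone f)
    (h : HasDerivAt f d t) : 0 ≤ d := by
  rw [hasDerivAt_iff_tendsto_slope] at h
  refine ge_of_tendsto h ?_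
  filter_upwards [self_mem_nhdsWithin] with u hu
  rcases lt_or_gt_of_ne (Set.mem_compl_iff _ _ |>.mp hu) with h' | h'
  · rw [slope_def_field, div_nonneg_iff]
    right
    constructor
    · simp only [sub_nonpos]; exact hf h'.le
    · linarith
  · rw [slope_def_field, div_nonneg_iff]
    left
    constructor
    · simp only [sub_nonneg]; exact hf h'.le
    · linarith

/-- the clamp function -/
noncomputable def cl (t : ℝ) : ℝ := max 0 (min 1 t)

lemma cl_mem : ∀ t, cl t ∈ Icc (0:ℝ) 1 := by
  intro t
  constructor
  · exact le_max_left _ _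
  · exact max_le (by norm_num) (min_le_left _ _)

lemma cl_monotone : Monotone cl := fun s t hst =>
  max_le_max le_rfl (min_le_min le_rfl hst)

lemma cl_eq_self {t : ℝ} (h : t ∈ Icc (0:ℝ) 1) : cl t = t := by
  obtain ⟨h0, h1⟩ := h
  rw [cl, min_eq_right h1, max_eq_right h0]

lemma continuous_cl : Continuous cl :=
  continuous_const.max (continuous_const.min continuous_id)

/-! ### continuity from AC -/

lemma AC.abs_lt {f : ℝ → ℝ} (hf : AbsolutelyContinuousOn f 0 1) {ε : ℝ} (hε : 0 < ε) :
    ∃ δ > (0:ℝ), ∀ x y : ℝ, 0 ≤ x → x ≤ y → y ≤ 1 → y - x < δ → |f y - f x| < ε := by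
  obtain ⟨δ, hδ, H⟩ := hf ε hε
  refine ⟨δ, hδ, fun x y h0 hxy h1 hlt => ?_⟩
  have := H 1 (fun _ => x) (fun _ => y) (fun _ => ⟨h0, hxy, h1⟩)
    (fun i j hij => absurd (Subsingleton.elim i j) hij) (by simpa using hlt)
  simpa using this

lemma AC.continuousOn {f : ℝ → ℝ} (hf : AbsolutelyContinuousOn f 0 1) :
    ContinuousOn f (Icc 0 1) := by
  intro x hx
  rw [Metric.continuousWithinAt_iff]
  intro ε hε
  obtain ⟨δ, hδ, H⟩ := AC.abs_lt hf hε
  refine ⟨δ, hδ, fun {y} hy hd => ?_⟩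
  rw [Real.dist_eq] at hd ⊢
  rcases le_total x y with h | h
  · have hyx : y - x < δ := by
      rw [abs_of_nonneg (by linarith)] at hd; exact hd
    exact H x y hx.1 h hy.2 hyx
  · have hxy : x - y < δ := by
      rw [abs_of_nonpos (by linarith)] at hd; linarith
    rw [abs_sub_comm]
    exact H y x hy.1 h hx.2 hxy

/-! ### Luzin N property -/

lemma cell_subset {M : ℕ} {h : ℝ} (hh : 0 < h) (hMh : (M:ℝ) * h = 1) (k : Fin M) :
    Icc ((k:ℝ)*h) (((k:ℝ)+1)*h) ⊆ Icc (0:ℝ) 1 := by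
  apply Icc_subset_Icc (by positivity)
  rw [← hMh]
  have : (k:ℝ) + 1 ≤ (M:ℝ) := by
    have := k.isLt
    exact_mod_cast Nat.succ_le_of_lt this
  nlinarith

set_option maxHeartbeats 2000000 in
lemma luzinN {f : ℝ → ℝ} (hf : AbsolutelyContinuousOn f 0 1) {E : Set ℝ}
    (hE : E ⊆ Icc 0 1) (hE0 : volume E = 0) : volume (f '' E) = 0 := by
  classical
  have hcont := AC.continuousOn hf
  suffices hkey : ∀ ε : ℝ, 0 < ε → volume (f '' E) ≤ ENNReal.ofReal ε by
    refine le_antisymm ?_ zero_le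
    have hlim := ENNReal.tendsto_ofReal
      tendsto_one_div_add_atTop_nhds_zero_nat
    rw [ENNReal.ofReal_zero] at hlim
    exact ge_of_tendsto' hlim fun n => hkey (1/((n:ℝ)+1)) (by positivity)
  intro ε hε
  obtain ⟨δ₀, hδ₀, H⟩ := hf ε hε
  obtain ⟨U, hEU, hUopen, hUvol⟩ := Set.exists_isOpen_lt_of_lt E (ENNReal.ofReal δ₀)
    (by rw [hE0]; exact ENNReal.ofReal_pos.mpr hδ₀)
  have hUne : Uᶜ.Nonempty := by
    by_contra hc
    rw [not_nonempty_iff_eq_empty, compl_empty_iff] at hc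
    rw [hc, Real.volume_univ] at hUvol
    exact (lt_irrefl _ (lt_of_le_of_lt le_top hUvol)).elim
  set Ej : ℕ → Set ℝ := fun j => {x | x ∈ E ∧ x ∈ Icc (1/(j+1) : ℝ) (1 - 1/(j+1)) ∧
    1/(j+1) ≤ Metric.infDist x Uᶜ} with hEjdef
  have hEjmono : Monotone Ej := by
    intro j k hjk x hx
    obtain ⟨hx1, hx2, hx3⟩ := hx
    have hjk' : (1:ℝ)/(k+1) ≤ 1/(j+1) := by
      apply one_div_le_one_div_of_le (by positivity)
      have : (j:ℝ) ≤ k := Nat.cast_le.mpr hjk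
      linarith
    exact ⟨hx1, ⟨le_trans hjk' hx2.1, le_trans hx2.2 (by linarith)⟩, le_trans hjk' hx3⟩
  have hEjunion : E ∩ Ioo 0 1 ⊆ ⋃ j, Ej j := by
    rintro x ⟨hxE, hxI⟩
    have hxU : x ∈ U := hEU hxE
    obtain ⟨r, hr, hball⟩ := Metric.isOpen_iff.mp hUopen x hxU
    have hrinf : r ≤ Metric.infDist x Uᶜ := by
      by_contra hcon
      push_neg at hcon
      obtain ⟨y, hy, hdy⟩ := (Metric.infDist_lt_iff hUne).mp hcon
      exact hy (hball (by rwa [Metric.mem_ball, dist_comm]))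
    obtain ⟨j, hj⟩ := exists_nat_one_div_lt
      (lt_min (lt_min hr hxI.1) (by linarith [hxI.2]) : (0:ℝ) < min (min r x) (1 - x))
    refine mem_iUnion.mpr ⟨j, hxE, ?_, ?_⟩
    · constructor
      · have := lt_of_lt_of_le hj (le_trans (min_le_left _ _) (min_le_right _ _))
        linarith
      · have := lt_of_lt_of_le hj (min_le_right _ _)
        linarith
    · have := lt_of_lt_of_le hj (le_trans (min_le_left _ _) (min_le_left _ _))
      linarith
  -- split off the endpoints
  have hsplit : volume (f '' E) ≤ volume (f '' (⋃ j, Ej j)) := by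
    have himg : f '' E ⊆ f '' (⋃ j, Ej j) ∪ {f 0, f 1} := by
      rintro y ⟨x, hxE, rfl⟩
      by_cases hxI : x ∈ Ioo (0:ℝ) 1
      · exact Or.inl (mem_image_of_mem f (hEjunion ⟨hxE, hxI⟩))
      · right
        have hxIcc := hE hxE
        simp only [mem_Icc] at hxIcc
        simp only [mem_Ioo, not_and_or, not_lt] at hxI
        rcases hxI with hx0 | hx1
        · have : x = 0 := le_antisymm hx0 hxIcc.1
          simp [this]
        · have : x = 1 := le_antisymm hxIcc.2 hx1
          simp [this]
    calc volume (f '' E) ≤ volume (f '' (⋃ j, Ej j) ∪ {f 0, f 1}) := measure_mono himg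
      _ ≤ volume (f '' (⋃ j, Ej j)) + volume ({f 0, f 1} : Set ℝ) := measure_union_le _ _
      _ = volume (f '' (⋃ j, Ej j)) := by
          rw [(Set.finite_singleton (f 1) |>.insert (f 0)).measure_zero volume, add_zero]
  refine le_trans hsplit ?_
  rw [image_iUnion, Monotone.measure_iUnion (fun j k hjk => image_mono (hEjmono hjk))]
  refine iSup_le fun j => ?_
  -- the per-`j` grid estimate
  set h : ℝ := 1/(2*((j:ℝ)+1)) with hhdef
  have hhpos : 0 < h := by positivity
  set M : ℕ := 2*(j+1) with hMdef
  have hMh : (M:ℝ) * h = 1 := by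
    rw [hhdef, hMdef]
    push_cast
    field_simp
  set K := closure (Ej j) with hKdef
  have hKsub1 : K ⊆ Icc (1/((j:ℝ)+1)) (1 - 1/((j:ℝ)+1)) := by
    apply closure_minimal ?_ isClosed_Icc
    intro x hx
    exact_mod_cast hx.2.1
  have hKdist : ∀ x ∈ K, 1/((j:ℝ)+1) ≤ Metric.infDist x Uᶜ := by
    have hcl : IsClosed {x : ℝ | 1/((j:ℝ)+1) ≤ Metric.infDist x Uᶜ} :=
      isClosed_le continuous_const (Metric.continuous_infDist_pt _)
    intro x hx
    refine closure_minimal ?_ hcl hx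
    intro y hy
    exact_mod_cast hy.2.2
  have hK01 : K ⊆ Icc (0:ℝ) 1 := by
    refine subset_trans hKsub1 (Icc_subset_Icc (by positivity) (by
      have : (0:ℝ) < 1/((j:ℝ)+1) := by positivity
      linarith))
  have hKU : ∀ x ∈ K, ∀ u : ℝ, |u - x| ≤ h → u ∈ U := by
    intro x hx u hu
    by_contra huU
    have h1 : Metric.infDist x Uᶜ ≤ dist x u := Metric.infDist_le_dist_of_mem huU
    rw [Real.dist_eq, abs_sub_comm] at h1
    have h2 := hKdist x hx
    have hhalf : h < 1/((j:ℝ)+1) := by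
      rw [hhdef]
      rw [div_lt_div_iff₀ (by positivity) (by positivity)]
      nlinarith
    linarith
  -- choose min and max points on each cell
  have hcellne : ∀ k : Fin M, (Icc ((k:ℝ)*h) (((k:ℝ)+1)*h)).Nonempty := by
    intro k
    rw [nonempty_Icc]
    nlinarith
  have hpq : ∀ k : Fin M, ∃ p ∈ Icc ((k:ℝ)*h) (((k:ℝ)+1)*h),
      ∃ q ∈ Icc ((k:ℝ)*h) (((k:ℝ)+1)*h),
      IsMinOn f (Icc ((k:ℝ)*h) (((k:ℝ)+1)*h)) p ∧
      IsMaxOn f (Icc ((k:ℝ)*h) (((k:ℝ)+1)*h)) q := by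
    intro k
    obtain ⟨p, hp, hpmin⟩ := isCompact_Icc.exists_isMinOn (hcellne k)
      (hcont.mono (cell_subset hhpos hMh k))
    obtain ⟨q, hq, hqmax⟩ := isCompact_Icc.exists_isMaxOn (hcellne k)
      (hcont.mono (cell_subset hhpos hMh k))
    exact ⟨p, hp, q, hq, hpmin, hqmax⟩
  choose p hp q hq hpmin hqmax using hpq
  set F : Finset (Fin M) :=
    Finset.univ.filter (fun k => (Icc ((k:ℝ)*h) (((k:ℝ)+1)*h) ∩ K).Nonempty) with hFdef
  set X : Fin M → ℝ := fun k => if k ∈ F then min (p k) (q k) else (k:ℝ)*h with hXdef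
  set Y : Fin M → ℝ := fun k => if k ∈ F then max (p k) (q k) else (k:ℝ)*h with hYdef
  have hXYcell : ∀ k : Fin M, X k ∈ Icc ((k:ℝ)*h) (((k:ℝ)+1)*h) ∧
      Y k ∈ Icc ((k:ℝ)*h) (((k:ℝ)+1)*h) ∧ X k ≤ Y k := by
    intro k
    by_cases hk : k ∈ F
    · simp only [hXdef, hYdef, if_pos hk]
      refine ⟨?_, ?_, min_le_max⟩
      · rcases min_cases (p k) (q k) with ⟨he, _⟩ | ⟨he, _⟩ <;> rw [he]
        exacts [hp k, hq k]
      · rcases max_cases (p k) (q k) with ⟨he, _⟩ | ⟨he, _⟩ <;> rw [he]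
        exacts [hp k, hq k]
    · simp only [hXdef, hYdef, if_neg hk]
      refine ⟨⟨le_rfl, by nlinarith⟩, ⟨le_rfl, by nlinarith⟩, le_rfl⟩
  have hconstraints : ∀ k : Fin M, 0 ≤ X k ∧ X k ≤ Y k ∧ Y k ≤ 1 := by
    intro k
    obtain ⟨h1, h2, h3⟩ := hXYcell k
    exact ⟨(cell_subset hhpos hMh k h1).1, h3, (cell_subset hhpos hMh k h2).2⟩
  have horder : ∀ k l : Fin M, (k:ℕ) < (l:ℕ) → Y k ≤ X l := by
    intro k l hkl
    have h1 := (hXYcell k).2.1.2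
    have h2 := (hXYcell l).1.1
    have : ((k:ℝ)+1) ≤ (l:ℝ) := by exact_mod_cast Nat.succ_le_of_lt hkl
    nlinarith
  have hdisj : ∀ k l : Fin M, k ≠ l → Disjoint (Ioo (X k) (Y k)) (Ioo (X l) (Y l)) := by
    intro k l hkl
    rw [Set.disjoint_left]
    intro w hw1 hw2
    rcases lt_trichotomy (k:ℕ) (l:ℕ) with hc | hc | hc
    · have := horder k l hc
      have := hw1.2
      have := hw2.1
      linarith
    · exact hkl (Fin.ext hc)
    · have := horder l k hc
      have := hw2.2
      have := hw1.1
      linarith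
  -- total length of the selected intervals
  have hcellU : ∀ k ∈ F, Icc ((k:ℝ)*h) (((k:ℝ)+1)*h) ⊆ U := by
    intro k hk
    obtain ⟨x, hxcell, hxK⟩ := (Finset.mem_filter.mp hk).2
    intro u hu
    refine hKU x hxK u ?_
    rw [abs_le]
    constructor
    · have := hu.1; have := hxcell.2; nlinarith
    · have := hu.2; have := hxcell.1; nlinarith
  have hlen : ∑ k ∈ F, h < δ₀ := by
    have hdisj' : (↑F : Set (Fin M)).PairwiseDisjoint
        (fun k : Fin M => Ioo ((k:ℝ)*h) (((k:ℝ)+1)*h)) := by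
      intro k _ l _ hkl
      rw [Function.onFun, Set.disjoint_left]
      intro w hw1 hw2
      rcases lt_trichotomy (k:ℕ) (l:ℕ) with hc | hc | hc
      · have : ((k:ℝ)+1) ≤ (l:ℝ) := by exact_mod_cast Nat.succ_le_of_lt hc
        have := hw1.2; have := hw2.1; nlinarith
      · exact hkl (Fin.ext hc)
      · have : ((l:ℝ)+1) ≤ (k:ℝ) := by exact_mod_cast Nat.succ_le_of_lt hc
        have := hw2.2; have := hw1.1; nlinarith
    have hmeas : volume (⋃ k ∈ F, Ioo ((k:ℝ)*h) (((k:ℝ)+1)*h)) = ∑ k ∈ F, volume (Ioo ((k:ℝ)*h) (((k:ℝ)+1)*h)) :=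
      measure_biUnion_finset hdisj' (fun k _ => measurableSet_Ioo)
    have hUbound : volume (⋃ k ∈ F, Ioo ((k:ℝ)*h) (((k:ℝ)+1)*h)) ≤ volume U := by
      apply measure_mono
      refine iUnion₂_subset fun k hk => subset_trans Ioo_subset_Icc_self (hcellU k hk)
    have hsum : ∑ k ∈ F, volume (Ioo ((k:ℝ)*h) (((k:ℝ)+1)*h)) = ENNReal.ofReal (∑ k ∈ F, h) := by
      rw [ENNReal.ofReal_sum_of_nonneg (fun k _ => hhpos.le)]
      congr 1
      ext k
      rw [Real.volume_Ioo]
      congr 1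
      ring
    rw [hsum] at hmeas
    have := lt_of_le_of_lt (hmeas ▸ hUbound) hUvol
    exact (ENNReal.ofReal_lt_ofReal_iff hδ₀).mp this
  have hsumlen : ∑ k, (Y k - X k) < δ₀ := by
    have hsub : ∑ k, (Y k - X k) = ∑ k ∈ F, (Y k - X k) := by
      rw [← Finset.sum_subset (Finset.subset_univ F)]
      intro x _ hx
      simp only [hXdef, hYdef, if_neg hx, sub_self]
    rw [hsub]
    refine lt_of_le_of_lt (Finset.sum_le_sum ?_) hlen
    intro k hk
    have h1 := (hXYcell k).1
    have h2 := (hXYcell k).2.1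
    nlinarith [h1.1, h1.2, h2.1, h2.2]
  have hAC := H M X Y hconstraints hdisj hsumlen
  -- image estimate
  have himgsub : f '' Ej j ⊆ ⋃ k ∈ F, Icc (f (p k)) (f (q k)) := by
    rintro y ⟨x, hxEj, rfl⟩
    have hxK : x ∈ K := subset_closure hxEj
    have hx01 : x ∈ Icc (0:ℝ) 1 := hK01 hxK
    -- find the cell containing x
    have hcell : ∃ k : Fin M, x ∈ Icc ((k:ℝ)*h) (((k:ℝ)+1)*h) := by
      have hM1 : 1 ≤ M := by omega
      have hfl := Nat.floor_le (div_nonneg hx01.1 hhpos.le)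
      have hfl2 := Nat.lt_floor_add_one (x/h)
      set k' : ℕ := min (Nat.floor (x/h)) (M - 1) with hk'def
      have hk'M : k' < M :=
        lt_of_le_of_lt (min_le_right _ _) (by omega)
      refine ⟨⟨k', hk'M⟩, ?_, ?_⟩
      · show ((⟨k', hk'M⟩ : Fin M) : ℝ) * h ≤ x
        have hcast : ((⟨k', hk'M⟩ : Fin M) : ℝ) = (k' : ℝ) := rfl
        rw [hcast]
        rcases le_or_gt (Nat.floor (x/h)) (M-1) with hc | hc
        · rw [hk'def, min_eq_left hc]
          calc (Nat.floor (x/h) : ℝ) * h ≤ (x/h) * h := by nlinarith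
            _ = x := by field_simp
        · rw [hk'def, min_eq_right hc.le]
          have hcast2 : ((M - 1 : ℕ) : ℝ) = (M:ℝ) - 1 := by
            rw [Nat.cast_sub hM1]; norm_num
          rw [hcast2]
          have : ((M:ℝ) - 1) * h = 1 - h := by rw [sub_mul, hMh]; ring
          rw [this]
          -- x = 1 in this case, but we only need x ≥ 1 - h which follows from x ≥ 1 - ...
          have hMfl : (M:ℝ) ≤ Nat.floor (x/h) := by exact_mod_cast (by omega : M ≤ Nat.floor (x/h))
          have hx1 : (1:ℝ) ≤ x := by
            have : (M:ℝ) ≤ x / h := le_trans hMfl hfl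
            calc (1:ℝ) = (M:ℝ) * h := hMh.symm
              _ ≤ (x/h) * h := by nlinarith
              _ = x := by field_simp
          linarith [hhpos.le]
      · show x ≤ (((⟨k', hk'M⟩ : Fin M) : ℝ) + 1) * h
        have hcast : ((⟨k', hk'M⟩ : Fin M) : ℝ) = (k' : ℝ) := rfl
        rw [hcast]
        rcases le_or_gt (Nat.floor (x/h)) (M-1) with hc | hc
        · rw [hk'def, min_eq_left hc]
          calc x = (x/h) * h := by field_simp
            _ ≤ ((Nat.floor (x/h) : ℝ) + 1) * h := by nlinarith
        · rw [hk'def, min_eq_right hc.le]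
          have hcast2 : ((M - 1 : ℕ) : ℝ) = (M:ℝ) - 1 := by
            rw [Nat.cast_sub hM1]; norm_num
          rw [hcast2]
          have : ((M:ℝ) - 1 + 1) * h = 1 := by rw [sub_add_cancel, hMh]
          rw [this]
          exact hx01.2
    obtain ⟨k, hk⟩ := hcell
    have hkF : k ∈ F := Finset.mem_filter.mpr ⟨Finset.mem_univ k, ⟨x, hk, hxK⟩⟩
    refine mem_iUnion₂.mpr ⟨k, hkF, ?_, ?_⟩
    · exact (isMinOn_iff.mp (hpmin k)) x hk
    · exact (isMaxOn_iff.mp (hqmax k)) x hk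
  calc volume (f '' Ej j)
      ≤ volume (⋃ k ∈ F, Icc (f (p k)) (f (q k))) := measure_mono himgsub
    _ ≤ ∑ k ∈ F, volume (Icc (f (p k)) (f (q k))) := measure_biUnion_finset_le F _
    _ = ∑ k ∈ F, ENNReal.ofReal (f (q k) - f (p k)) := by
        refine Finset.sum_congr rfl fun k hk => ?_
        rw [Real.volume_Icc]
    _ = ENNReal.ofReal (∑ k ∈ F, (f (q k) - f (p k))) := by
        rw [ENNReal.ofReal_sum_of_nonneg]
        intro k hk
        exact sub_nonneg.mpr ((isMinOn_iff.mp (hpmin k)) (q k) (hq k))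
    _ ≤ ENNReal.ofReal ε := by
        apply ENNReal.ofReal_le_ofReal
        have heq : ∀ k ∈ F, f (q k) - f (p k) = |f (Y k) - f (X k)| := by
          intro k hk
          have hfp : f (p k) ≤ f (q k) := (isMinOn_iff.mp (hpmin k)) (q k) (hq k)
          rcases le_total (p k) (q k) with hpq | hpq
          · simp only [hXdef, hYdef, if_pos hk, min_eq_left hpq, max_eq_right hpq]
            rw [abs_of_nonneg (by linarith)]
          · simp only [hXdef, hYdef, if_pos hk, min_eq_right hpq, max_eq_left hpq]
            rw [abs_of_nonpos (by linarith)]; ring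
        rw [Finset.sum_congr rfl heq]
        refine le_trans ?_ hAC.le
        apply Finset.sum_le_sum_of_subset_of_nonneg (Finset.subset_univ F)
        intro k _ _
        exact abs_nonneg _

/-! ### monotonicity -/

lemma monotoneOn_of_ac {f : ℝ → ℝ} (hf : AbsolutelyContinuousOn f 0 1)
    (hd : ∀ᵐ t ∂(volume.restrict (Icc (0:ℝ) 1)),
      ∃ d : ℝ, HasDerivWithinAt f d (Icc (0:ℝ) 1) t ∧ 0 ≤ d) :
    MonotoneOn f (Icc 0 1) := by
  have hcont := AC.continuousOn hf
  have hae : ∀ᵐ t ∂(volume.restrict (Icc (0:ℝ) 1)),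
      t ∈ Ioo (0:ℝ) 1 ∧ ∃ d, HasDerivAt f d t ∧ 0 ≤ d := by
    filter_upwards [hd, ae_restrict_mem_Ioo] with t ht hIoo
    obtain ⟨d, hdw, hd0⟩ := ht
    exact ⟨hIoo, d, hdw.hasDerivAt (Icc_mem_nhds hIoo.1 hIoo.2), hd0⟩
  set N := {t | t ∈ Icc (0:ℝ) 1 ∧
    ¬ (t ∈ Ioo (0:ℝ) 1 ∧ ∃ d, HasDerivAt f d t ∧ 0 ≤ d)} with hNdef
  have hNnull : volume N = 0 := null_of_ae_restrict hae
  have hNsub : N ⊆ Icc 0 1 := fun t ht => ht.1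
  -- main step : for every ε > 0 the function g = f + ε • id is monotone on [0,1]
  have main : ∀ ε : ℝ, 0 < ε → ∀ x ∈ Icc (0:ℝ) 1, ∀ y ∈ Icc (0:ℝ) 1, x < y →
      f x + ε * x ≤ f y + ε * y := by
    intro ε hε x hx y hy hxy
    set g : ℝ → ℝ := fun t => f t + ε * t with hgdef
    have hgc : ContinuousOn g (Icc 0 1) :=
      hcont.add ((continuous_const.mul continuous_id).continuousOn)
    have hgac : AbsolutelyContinuousOn g 0 1 := by
      intro ε₀ hε₀
      obtain ⟨δ, hδ, H⟩ := hf (ε₀/2) (by linarith)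
      refine ⟨min δ (ε₀ / (2 * ε)), by positivity, fun n x y hxy hdisj hsum => ?_⟩
      have hsum1 : ∑ i, (y i - x i) < δ := lt_of_lt_of_le hsum (min_le_left _ _)
      have hsum2 : ∑ i, (y i - x i) < ε₀ / (2 * ε) := lt_of_lt_of_le hsum (min_le_right _ _)
      calc ∑ i, |g (y i) - g (x i)|
          ≤ ∑ i, (|f (y i) - f (x i)| + ε * (y i - x i)) := by
            apply Finset.sum_le_sum; intro i _
            have h1 : g (y i) - g (x i) = (f (y i) - f (x i)) + ε * (y i - x i) := by
              simp only [hgdef]; ring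
            rw [h1]
            refine (abs_add_le _ _).trans ?_
            have h2 : |ε * (y i - x i)| = ε * (y i - x i) :=
              abs_of_nonneg (mul_nonneg hε.le (by linarith [(hxy i).2.1]))
            rw [h2]
        _ = (∑ i, |f (y i) - f (x i)|) + ε * ∑ i, (y i - x i) := by
            rw [Finset.sum_add_distrib, Finset.mul_sum]
        _ < ε₀/2 + ε * (ε₀ / (2 * ε)) := by
            have := H n x y hxy hdisj hsum1
            have hsnn : (0:ℝ) ≤ ∑ i, (y i - x i) :=
              Finset.sum_nonneg (fun i _ => by linarith [(hxy i).2.1])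
            have := mul_lt_mul_of_pos_left hsum2 hε
            linarith
        _ = ε₀ := by
            have : ε * (ε₀ / (2 * ε)) = ε₀ / 2 := by
              field_simp
            rw [this]; ring
    by_contra hgt
    push_neg at hgt
    -- every value in `Ioo (g y) (g x)` is attained at a point of `N`
    have himg : Ioo (g y) (g x) ⊆ g '' N := by
      intro c hc
      have hxy01 : Icc x y ⊆ Icc (0:ℝ) 1 := Icc_subset_Icc hx.1 hy.2
      have hgcxy : ContinuousOn g (Icc x y) := hgc.mono hxy01
      set T := {t | t ∈ Icc x y ∧ g t = c} with hTdef
      have hTne : T.Nonempty := by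
        have := intermediate_value_Icc' hxy.le hgcxy
          (Ioo_subset_Icc_self hc)
        obtain ⟨t, htm, hteq⟩ := this
        exact ⟨t, htm, hteq⟩
      have hTclosed : IsClosed T := by
        have : T = Icc x y ∩ g ⁻¹' {c} := by
          ext t; simp [hTdef]
        rw [this]
        exact hgcxy.preimage_isClosed_of_isClosed isClosed_Icc isClosed_singleton
      have hTcomp : IsCompact T :=
        isCompact_Icc.of_isClosed_subset hTclosed (fun t ht => ht.1)
      set t₀ := sSup T with ht₀def
      have ht₀T : t₀ ∈ T := hTcomp.sSup_mem hTne
      have ht₀xy : t₀ ∈ Icc x y := ht₀T.1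
      have hgt₀ : g t₀ = c := ht₀T.2
      have ht₀y : t₀ < y := by
        rcases lt_or_eq_of_le ht₀xy.2 with h | h
        · exact h
        · exfalso; rw [h] at hgt₀; exact (ne_of_gt hc.1) hgt₀.symm
      have ht₀N : t₀ ∈ N := by
        by_contra ht₀N
        have ht₀I : t₀ ∈ Icc (0:ℝ) 1 := hxy01 ht₀xy
        have hgood : t₀ ∈ Ioo (0:ℝ) 1 ∧ ∃ d, HasDerivAt f d t₀ ∧ 0 ≤ d := by
          by_contra hbad
          exact ht₀N ⟨ht₀I, hbad⟩
        obtain ⟨ht₀Ioo, d, hfd, hd0⟩ := hgood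
        have hgd : HasDerivAt g (d + ε) t₀ := by
          have := hfd.add ((hasDerivAt_id t₀).const_mul ε)
          simp only [mul_one] at this
          exact this
        rw [hasDerivAt_iff_tendsto_slope] at hgd
        have hev : ∀ᶠ u in nhdsWithin t₀ {t₀}ᶜ, 0 < slope g t₀ u :=
          hgd.eventually (eventually_gt_nhds (by linarith))
        have hev' : ∀ᶠ u in nhdsWithin t₀ (Ioi t₀), 0 < slope g t₀ u :=
          hev.filter_mono (nhdsWithin_mono _ (fun u hu => ne_of_gt hu))
        have hev2 : ∀ᶠ u in nhdsWithin t₀ (Ioi t₀), u ∈ Ioo t₀ y :=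
          Filter.eventually_iff.mpr (Ioo_mem_nhdsGT ht₀y)
        obtain ⟨u, hu1, hu2⟩ := (hev'.and hev2).exists
        have hut₀ : t₀ < u := hu2.1
        have hgu : c < g u := by
          have h1 : 0 < (g u - g t₀) / (u - t₀) := by rwa [slope_def_field] at hu1
          have hpos : 0 < u - t₀ := by linarith
          have h2 : 0 < g u - g t₀ := by
            by_contra h
            push_neg at h
            have : (g u - g t₀) / (u - t₀) ≤ 0 :=
              div_nonpos_iff.mpr (Or.inr ⟨h, hpos.le⟩)
            linarith
          linarith [hgt₀]
        have hmem : c ∈ Icc (g y) (g u) := ⟨hc.1.le, hgu.le⟩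
        have hIcc : Icc u y ⊆ Icc x y := Icc_subset_Icc (by linarith [ht₀xy.1]) le_rfl
        obtain ⟨v, hvm, hveq⟩ := intermediate_value_Icc' hu2.2.le (hgcxy.mono hIcc) hmem
        have hvT : v ∈ T := ⟨hIcc hvm, hveq⟩
        have : v ≤ t₀ := le_csSup hTcomp.bddAbove hvT
        linarith [hvm.1]
      exact (Set.mem_image g N c).mpr ⟨t₀, ht₀N, hgt₀⟩
    have h0 : volume (Ioo (g y) (g x)) = 0 :=
      measure_mono_null himg (luzinN hgac hNsub hNnull)
    rw [Real.volume_Ioo] at h0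
    exact (ENNReal.ofReal_pos.mpr (by simp only [hgdef]; linarith)).ne' h0
  -- conclude monotonicity
  intro x hx y hy hxy
  rcases eq_or_lt_of_le hxy with rfl | hlt
  · exact le_rfl
  by_contra hfl
  push_neg at hfl
  have hc : 0 < f x - f y := by linarith
  have hyx : 0 < y - x := by linarith
  set ε := (f x - f y) / (2 * (y - x)) with hεdef
  have hεpos : 0 < ε := div_pos hc (by linarith)
  have hmain := main ε hεpos x hx y hy hlt
  have hεy : ε * (y - x) = (f x - f y) / 2 := by
    rw [hεdef]; field_simp
  have h2 : ε * y - ε * x = ε * (y - x) := by ring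
  linarith

lemma strictMonoOn_of_mem (γ : ℝ → ℝ) (hγ : InGamma0 γ) : StrictMonoOn γ (Icc 0 1) := by
  obtain ⟨⟨hac, hmap, h0, h1, hd⟩, hd0⟩ := hγ
  have hmono := monotoneOn_of_ac hac hd
  intro a ha b hb hab
  rcases lt_or_eq_of_le (hmono ha hb hab.le) with h | h
  · exact h
  exfalso
  have hconst : ∀ t ∈ Icc a b, γ t = γ a := by
    intro t ⟨h1t, h2t⟩
    have hta : t ∈ Icc (0:ℝ) 1 := ⟨le_trans ha.1 h1t, le_trans h2t hb.2⟩
    exact le_antisymm (h ▸ hmono hta hb h2t) (hmono ha hta h1t)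
  have hNnull := null_of_ae_restrict hd0
  have hnsub : ¬ (Ioo a b ⊆ {t | t ∈ Icc (0:ℝ) 1 ∧
      ¬ ∃ d, HasDerivWithinAt γ d (Icc (0:ℝ) 1) t ∧ 0 < d}) := by
    intro hsub
    have h2 := measure_mono_null hsub hNnull
    rw [Real.volume_Ioo] at h2
    exact (ENNReal.ofReal_pos.mpr (by linarith)).ne' h2
  obtain ⟨t, htab, htN⟩ := not_subset.mp hnsub
  have htI : t ∈ Icc (0:ℝ) 1 := ⟨le_trans ha.1 htab.1.le, le_trans htab.2.le hb.2⟩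
  have hex : ∃ d, HasDerivWithinAt γ d (Icc (0:ℝ) 1) t ∧ 0 < d := by
    by_contra hne
    exact htN ⟨htI, hne⟩
  obtain ⟨d, hdw, hdpos⟩ := hex
  have htIoo : t ∈ Ioo (0:ℝ) 1 :=
    ⟨lt_of_le_of_lt ha.1 htab.1, lt_of_lt_of_le htab.2 hb.2⟩
  have hAt : HasDerivAt γ d t := hdw.hasDerivAt (Icc_mem_nhds htIoo.1 htIoo.2)
  have hzero : HasDerivAt γ 0 t := by
    have hev : ∀ᶠ u in nhds t, γ u = γ a := by
      filter_upwards [Ioo_mem_nhds htab.1 htab.2] with u hu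
      exact hconst u ⟨hu.1.le, hu.2.le⟩
    have hev' : γ =ᶠ[nhds t] (fun _ => γ a) := hev
    exact (hasDerivAt_const t (γ a)).congr_of_eventuallyEq hev'
  exact hdpos.ne' (hAt.unique hzero)

lemma mono_ae_deriv {f : ℝ → ℝ} (hf : MonotoneOn f (Icc 0 1)) :
    ∀ᵐ t ∂(volume.restrict (Icc (0:ℝ) 1)),
      ∃ d : ℝ, HasDerivWithinAt f d (Icc (0:ℝ) 1) t ∧ 0 ≤ d := by
  set g : ℝ → ℝ := fun t => f (cl t) with hg
  have hgm : Monotone g := fun s t hst => hf (cl_mem s) (cl_mem t) (cl_monotone hst)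
  have hdiff : ∀ᵐ t ∂(volume.restrict (Icc (0:ℝ) 1)), DifferentiableAt ℝ g t :=
    ae_restrict_of_ae hgm.ae_differentiableAt
  filter_upwards [hdiff, ae_restrict_mem_Ioo] with t hdt htI
  have hIccnhds : Icc (0:ℝ) 1 ∈ nhds t := Icc_mem_nhds htI.1 htI.2
  have hEq : f =ᶠ[nhds t] g := by
    filter_upwards [hIccnhds] with u hu
    simp [hg, cl_eq_self hu]
  have hg' : HasDerivAt g (deriv g t) t := hdt.hasDerivAt
  have hf' : HasDerivAt f (deriv g t) t := hg'.congr_of_eventuallyEq hEq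
  exact ⟨deriv g t, hf'.hasDerivWithinAt, Monotone.hasDerivAt_nonneg hgm hg'⟩

/-! ### the master lemma on inverses -/

lemma inverse_master (γ : ℝ → ℝ) (hγ : InGamma0 γ) :
    ∃ δ : ℝ → ℝ, InGamma0 δ ∧
      (∀ t ∈ Icc (0:ℝ) 1, δ (γ t) = t ∧ γ (δ t) = t) ∧
      (∀ᵐ y ∂(volume.restrict (Icc (0:ℝ) 1)),
        ∃ d : ℝ, 0 < d ∧ HasDerivWithinAt γ d (Icc (0:ℝ) 1) (δ y) ∧
          HasDerivWithinAt δ (1 / d) (Icc (0:ℝ) 1) y) := by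
  classical
  obtain ⟨⟨hac, hmap, h0, h1, hdnn⟩, hdpos⟩ := hγ
  have hcont := AC.continuousOn hac
  have hsm := strictMonoOn_of_mem γ ⟨⟨hac, hmap, h0, h1, hdnn⟩, hdpos⟩
  -- the strictly monotone global extension `g`
  set g : ℝ → ℝ := fun t => γ (cl t) + (t - cl t) with hgdef
  have hgIcc : ∀ t ∈ Icc (0:ℝ) 1, g t = γ t := by
    intro t ht
    simp only [hgdef, cl_eq_self ht]
    ring
  have hglo : ∀ t : ℝ, t ≤ 0 → g t = t := by
    intro t ht
    have hclt : cl t = 0 := by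
      rw [cl, min_eq_right (le_trans ht zero_le_one), max_eq_left ht]
    simp only [hgdef, hclt, h0]
    ring
  have hghi : ∀ t : ℝ, 1 ≤ t → g t = t := by
    intro t ht
    have hclt : cl t = 1 := by
      rw [cl, min_eq_left ht, max_eq_right zero_le_one]
    simp only [hgdef, hclt, h1]
    ring
  have hgsm : StrictMono g := by
    intro s t hst
    rcases le_or_gt t 0 with ht | ht
    · rw [hglo s (by linarith), hglo t ht]; exact hst
    rcases le_or_gt 1 s with hs | hs
    · rw [hghi s hs, hghi t (by linarith)]; exact hst
    rcases le_or_gt s 0 with hs0 | hs0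
    · rcases le_or_gt t 1 with ht1 | ht1
      · rw [hglo s hs0, hgIcc t ⟨ht.le, ht1⟩]
        have : γ 0 < γ t := hsm ⟨le_rfl, zero_le_one⟩ ⟨ht.le, ht1⟩ ht
        rw [h0] at this
        linarith
      · rw [hglo s hs0, hghi t ht1.le]
        exact hst
    · rcases le_or_gt t 1 with ht1 | ht1
      · rw [hgIcc s ⟨hs0.le, hs.le⟩, hgIcc t ⟨by linarith, ht1⟩]
        exact hsm ⟨hs0.le, hs.le⟩ ⟨by linarith, ht1⟩ hst
      · rw [hgIcc s ⟨hs0.le, hs.le⟩, hghi t ht1.le]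
        have := (hmap ⟨hs0.le, hs.le⟩).2
        linarith
  have hgcont : Continuous g := by
    rw [hgdef]
    exact (hcont.comp_continuous continuous_cl cl_mem).add
      (continuous_id.sub continuous_cl)
  have hgsurj : Function.Surjective g := by
    intro y
    rcases le_or_gt y 0 with hy | hy
    · exact ⟨y, hglo y hy⟩
    rcases le_or_gt 1 y with hy1 | hy1
    · exact ⟨y, hghi y hy1⟩
    · have hmem : y ∈ Icc (γ 0) (γ 1) := by rw [h0, h1]; exact ⟨hy.le, hy1.le⟩
      obtain ⟨t, htm, hteq⟩ := intermediate_value_Icc zero_le_one hcont hmem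
      exact ⟨t, by rw [hgIcc t htm]; exact hteq⟩
  set e : ℝ ≃o ℝ := StrictMono.orderIsoOfSurjective g hgsm hgsurj with hedef
  have hecoe : ∀ t, e t = g t := fun t => rfl
  set δ : ℝ → ℝ := fun y => e.symm y with hδdef
  have hδcont : Continuous δ := e.symm.continuous
  have hge : ∀ y, g (δ y) = y := fun y => e.apply_symm_apply y
  have hδg : ∀ t, δ (g t) = t := fun t => e.symm_apply_apply t
  have hδmono : Monotone δ := fun a b hab => e.symm.monotone hab
  have hδ0 : δ 0 = 0 := by
    have := hδg 0
    rwa [hglo 0 le_rfl] at this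
  have hδ1 : δ 1 = 1 := by
    have := hδg 1
    rwa [hghi 1 le_rfl] at this
  have hδmap : MapsTo δ (Icc 0 1) (Icc 0 1) := by
    intro y hy
    constructor
    · rw [← hδ0]; exact hδmono hy.1
    · rw [← hδ1]; exact hδmono hy.2
  have hδγ : ∀ t ∈ Icc (0:ℝ) 1, δ (γ t) = t := fun t ht => by
    rw [← hgIcc t ht]; exact hδg t
  have hγδ : ∀ y ∈ Icc (0:ℝ) 1, γ (δ y) = y := fun y hy => by
    rw [← hgIcc (δ y) (hδmap hy)]; exact hge y
  -- upgrading derivatives to the extension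
  have hgeq : ∀ t ∈ Ioo (0:ℝ) 1, g =ᶠ[nhds t] γ := by
    intro t ht
    filter_upwards [Icc_mem_nhds ht.1 ht.2] with u hu
    exact hgIcc u hu
  have hgderiv : ∀ t ∈ Ioo (0:ℝ) 1, ∀ d : ℝ, HasDerivWithinAt γ d (Icc 0 1) t →
      HasDerivAt g d t := by
    intro t ht d hd
    exact (hd.hasDerivAt (Icc_mem_nhds ht.1 ht.2)).congr_of_eventuallyEq (hgeq t ht)
  have hδderiv : ∀ x d, 0 < d → HasDerivAt g d x → HasDerivAt δ d⁻¹ (g x) := by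
    intro x d hd0 hgd
    refine HasDerivAt.of_local_left_inverse hδcont.continuousAt ?_ (ne_of_gt hd0)
      (Filter.Eventually.of_forall hge)
    rw [hδg x]
    exact hgd
  -- the bad set of `γ`
  set N : Set ℝ := {t | t ∈ Icc (0:ℝ) 1 ∧
    ¬ (t ∈ Ioo (0:ℝ) 1 ∧ ∃ d, 0 < d ∧ HasDerivAt g d t)} with hNdef
  have hNnull : volume N = 0 := by
    refine null_of_ae_restrict ?_
    filter_upwards [hdpos, ae_restrict_mem_Ioo] with t h1 h2
    obtain ⟨d, hdw, hd0⟩ := h1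
    exact ⟨h2, d, hd0, hgderiv t h2 d hdw⟩
  have hNsub : N ⊆ Icc (0:ℝ) 1 := fun t ht => ht.1
  -- the measurable sets where the derivative is bounded below
  set A : ℕ → Set ℝ := fun m => Ioo (0:ℝ) 1 ∩
    ({t | DifferentiableAt ℝ g t} ∩ deriv g ⁻¹' Ici (1/((m:ℝ)+1))) with hAdef
  have hAmeas : ∀ m, MeasurableSet (A m) := fun m =>
    measurableSet_Ioo.inter ((measurableSet_of_differentiableAt ℝ g).inter
      ((measurable_deriv g) measurableSet_Ici))
  have hAfull : volume (Icc (0:ℝ) 1 \ ⋃ m, A m) = 0 := by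
    have hh := null_of_ae_restrict (p := fun t => t ∈ ⋃ m, A m) ?_
    · refine measure_mono_null ?_ hh
      intro t ht
      exact ⟨ht.1, ht.2⟩
    · filter_upwards [hdpos, ae_restrict_mem_Ioo] with t h1 h2
      obtain ⟨d, hdw, hd0⟩ := h1
      have hg' := hgderiv t h2 d hdw
      obtain ⟨m, hm⟩ := exists_nat_one_div_lt hd0
      refine mem_iUnion.mpr ⟨m, h2, hg'.differentiableAt, ?_⟩
      simp only [mem_preimage, mem_Ici, hg'.deriv]
      exact hm.le
  set B : ℕ → Set ℝ := fun m => Icc (0:ℝ) 1 \ A m with hBdef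
  have hAmono : Monotone A := by
    intro m m' hmm t ht
    refine ⟨ht.1, ht.2.1, ?_⟩
    have h1 : (1:ℝ)/((m':ℝ)+1) ≤ 1/((m:ℝ)+1) := by
      apply one_div_le_one_div_of_le (by positivity)
      have : (m:ℝ) ≤ (m':ℝ) := Nat.cast_le.mpr hmm
      linarith
    exact le_trans h1 ht.2.2
  have hBtend : Filter.Tendsto (fun m => volume (B m)) Filter.atTop (nhds 0) := by
    have h2 : volume (⋂ m, B m) = 0 := by
      have : (⋂ m, B m) = Icc (0:ℝ) 1 \ ⋃ m, A m := by
        rw [hBdef]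
        exact (Set.diff_iUnion _ _).symm
      rw [this]
      exact hAfull
    have halt := tendsto_measure_iInter_atTop (μ := volume) (s := B)
      (fun m => ((measurableSet_Icc.diff (hAmeas m)).nullMeasurableSet))
      (fun m m' hmm => diff_subset_diff_right (hAmono hmm))
      ⟨0, ne_of_lt (lt_of_le_of_lt (measure_mono (diff_subset : B 0 ⊆ Icc (0:ℝ) 1))
        (by rw [Real.volume_Icc]; exact ENNReal.ofReal_lt_top))⟩
    rw [h2] at halt
    exact halt
  -- images under `g` as preimages under `δ`
  have hgimg : ∀ S : Set ℝ, g '' S = δ ⁻¹' S := by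
    intro S
    ext u
    constructor
    · rintro ⟨t, htS, rfl⟩
      rwa [mem_preimage, hδg t]
    · intro hu
      exact ⟨δ u, hu, hge u⟩
  -- the key Zarecki-type estimate
  have key : ∀ m : ℕ, ∀ S : Set ℝ, MeasurableSet S → S ⊆ A m →
      volume S ≤ ENNReal.ofReal ((m:ℝ)+1) * volume (g '' S) := by
    intro m S hSmeas hSA
    set S' := g '' S with hS'def
    have hS'meas : MeasurableSet S' := by
      rw [hS'def, hgimg]
      exact hδcont.measurable hSmeas
    have hδdiff : ∀ x ∈ S', HasDerivAt δ (deriv δ x) x ∧ 0 < deriv δ x ∧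
        deriv δ x ≤ (m:ℝ)+1 := by
      rintro x ⟨t, htS, rfl⟩
      obtain ⟨htIoo, htdiff, htd⟩ := hSA htS
      simp only [mem_preimage, mem_Ici] at htd
      have hgd : HasDerivAt g (deriv g t) t := htdiff.hasDerivAt
      have hd0 : 0 < deriv g t := lt_of_lt_of_le (by positivity) htd
      have hδd := hδderiv t (deriv g t) hd0 hgd
      have hderiv_eq : deriv δ (g t) = (deriv g t)⁻¹ := hδd.deriv
      refine ⟨by rw [hderiv_eq]; exact hδd, by rw [hderiv_eq]; positivity, ?_⟩
      rw [hderiv_eq]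
      calc (deriv g t)⁻¹ ≤ ((1:ℝ)/((m:ℝ)+1))⁻¹ := by
            apply inv_anti₀ (by positivity) htd
        _ = (m:ℝ)+1 := by rw [one_div, inv_inv]
    have happ := MeasureTheory.addHaar_image_le_lintegral_abs_det_fderiv volume hS'meas
      (f' := fun x => ContinuousLinearMap.smulRight (1 : ℝ →L[ℝ] ℝ) (deriv δ x))
      (fun x hx => ((hδdiff x hx).1.hasFDerivAt).hasFDerivWithinAt)
    have hδS' : δ '' S' = S := by
      rw [hS'def, image_image]
      have : ∀ t, δ (g t) = t := hδg
      simp only [this, image_id']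
    rw [hδS'] at happ
    refine le_trans happ ?_
    calc ∫⁻ x in S', ENNReal.ofReal
          |(ContinuousLinearMap.smulRight (1 : ℝ →L[ℝ] ℝ) (deriv δ x)).det| ∂volume
        ≤ ∫⁻ _ in S', ENNReal.ofReal ((m:ℝ)+1) ∂volume := by
          apply setLIntegral_mono' hS'meas
          intro x hx
          rw [ContinuousLinearMap.det_smulRight, ContinuousLinearMap.one_apply, one_mul]
          apply ENNReal.ofReal_le_ofReal
          rw [abs_of_pos (hδdiff x hx).2.1]
          exact (hδdiff x hx).2.2
      _ = ENNReal.ofReal ((m:ℝ)+1) * volume S' := setLIntegral_const _ _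
  -- absolute continuity of the inverse
  have hδac : AbsolutelyContinuousOn δ 0 1 := by
    intro ε hε
    have hev : ∀ᶠ m in Filter.atTop, volume (B m) < ENNReal.ofReal (ε/2) := by
      refine hBtend.eventually_lt_const ?_
      exact ENNReal.ofReal_pos.mpr (by linarith)
    obtain ⟨m, hm⟩ := hev.exists
    refine ⟨ε/(2*((m:ℝ)+1)), by positivity, fun n x y hxy hdisj hsum => ?_⟩
    have hmemx : ∀ i, x i ∈ Icc (0:ℝ) 1 := fun i =>
      ⟨(hxy i).1, le_trans (hxy i).2.1 (hxy i).2.2⟩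
    have hmemy : ∀ i, y i ∈ Icc (0:ℝ) 1 := fun i =>
      ⟨le_trans (hxy i).1 (hxy i).2.1, (hxy i).2.2⟩
    set Xi : Fin n → ℝ := fun i => δ (x i) with hXidef
    set Yi : Fin n → ℝ := fun i => δ (y i) with hYidef
    have hXYi : ∀ i, Xi i ≤ Yi i := fun i => hδmono (hxy i).2.1
    set E : Set ℝ := ⋃ i, Ioo (Xi i) (Yi i) with hEdef
    have hEsub : E ⊆ Icc (0:ℝ) 1 := by
      refine iUnion_subset fun i => ?_
      refine subset_trans Ioo_subset_Icc_self (Icc_subset_Icc ?_ ?_)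
      · exact (hδmap (hmemx i)).1
      · exact (hδmap (hmemy i)).2
    have hEmeas : MeasurableSet E := MeasurableSet.iUnion fun i => measurableSet_Ioo
    have hdisjI : Pairwise (Function.onFun Disjoint fun i => Ioo (Xi i) (Yi i)) := by
      intro i j hij
      rw [Function.onFun, Set.disjoint_left]
      intro w hw1 hw2
      have hxyi : x i < y i := by
        rcases lt_or_eq_of_le (hxy i).2.1 with hlt | heq
        · exact hlt
        · exfalso
          have hXY : Xi i = Yi i := by rw [hXidef, hYidef]; simp only; rw [heq]
          rw [← hXY] at hw1
          exact lt_irrefl w (lt_trans hw1.2 hw1.1)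
      have hxyj : x j < y j := by
        rcases lt_or_eq_of_le (hxy j).2.1 with hlt | heq
        · exact hlt
        · exfalso
          have hXY : Xi j = Yi j := by rw [hXidef, hYidef]; simp only; rw [heq]
          rw [← hXY] at hw2
          exact lt_irrefl w (lt_trans hw2.2 hw2.1)
      have horder : y i ≤ x j ∨ y j ≤ x i := by
        by_contra hcon
        push_neg at hcon
        obtain ⟨hc1, hc2⟩ := hcon
        have hlt : max (x i) (x j) < min (y i) (y j) := by
          rcases max_cases (x i) (x j) with ⟨he, _⟩ | ⟨he, _⟩ <;>
            rcases min_cases (y i) (y j) with ⟨he2, _⟩ | ⟨he2, _⟩ <;>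
            rw [he, he2] <;> linarith
        obtain ⟨w', hw'⟩ := nonempty_Ioo.mpr hlt
        have hw'i : w' ∈ Ioo (x i) (y i) :=
          ⟨lt_of_le_of_lt (le_max_left _ _) hw'.1, lt_of_lt_of_le hw'.2 (min_le_left _ _)⟩
        have hw'j : w' ∈ Ioo (x j) (y j) :=
          ⟨lt_of_le_of_lt (le_max_right _ _) hw'.1, lt_of_lt_of_le hw'.2 (min_le_right _ _)⟩
        exact Set.disjoint_left.mp (hdisj i j hij) hw'i hw'j
      rcases horder with hor | hor
      · have : Yi i ≤ Xi j := hδmono hor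
        linarith [hw1.2, hw2.1]
      · have : Yi j ≤ Xi i := hδmono hor
        linarith [hw2.2, hw1.1]
    have hEvol : volume E = ENNReal.ofReal (∑ i, (Yi i - Xi i)) := by
      rw [hEdef, measure_iUnion hdisjI fun i => measurableSet_Ioo]
      rw [tsum_fintype]
      rw [ENNReal.ofReal_sum_of_nonneg (fun i _ => sub_nonneg.mpr (hXYi i))]
      exact Finset.sum_congr rfl fun i _ => Real.volume_Ioo
    -- main bound on `volume E`
    have hmain : volume E < ENNReal.ofReal ε := by
      have hsplit := measure_le_inter_add_diff volume E (A m)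
      have hdiff : volume (E \ A m) < ENNReal.ofReal (ε/2) := by
        refine lt_of_le_of_lt (measure_mono ?_) hm
        exact diff_subset_diff_left hEsub
      have hinter : volume (E ∩ A m) ≤ ENNReal.ofReal (ε/2) := by
        have hkey := key m (E ∩ A m) (hEmeas.inter (hAmeas m)) inter_subset_right
        have himgsub : g '' (E ∩ A m) ⊆ ⋃ i, Icc (x i) (y i) := by
          rintro u ⟨t, ⟨htE, _⟩, rfl⟩
          obtain ⟨i, hti⟩ := mem_iUnion.mp htE
          refine mem_iUnion.mpr ⟨i, ?_, ?_⟩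
          · have := hgsm.monotone hti.1.le
            rwa [hge (x i)] at this
          · have := hgsm.monotone hti.2.le
            rwa [hge (y i)] at this
        have himgvol : volume (g '' (E ∩ A m)) ≤ ENNReal.ofReal (ε/(2*((m:ℝ)+1))) := by
          calc volume (g '' (E ∩ A m)) ≤ volume (⋃ i, Icc (x i) (y i)) :=
                measure_mono himgsub
            _ ≤ ∑ i, volume (Icc (x i) (y i)) := by
                exact measure_iUnion_fintype_le _ _
            _ = ENNReal.ofReal (∑ i, (y i - x i)) := by
                rw [ENNReal.ofReal_sum_of_nonneg (fun i _ => by linarith [(hxy i).2.1])]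
                exact Finset.sum_congr rfl fun i _ => Real.volume_Icc
            _ ≤ ENNReal.ofReal (ε/(2*((m:ℝ)+1))) := ENNReal.ofReal_le_ofReal hsum.le
        calc volume (E ∩ A m) ≤ ENNReal.ofReal ((m:ℝ)+1) * volume (g '' (E ∩ A m)) := hkey
          _ ≤ ENNReal.ofReal ((m:ℝ)+1) * ENNReal.ofReal (ε/(2*((m:ℝ)+1))) :=
              by gcongr
          _ = ENNReal.ofReal (((m:ℝ)+1) * (ε/(2*((m:ℝ)+1)))) :=
              (ENNReal.ofReal_mul (by positivity)).symm
          _ = ENNReal.ofReal (ε/2) := by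
              congr 1
              field_simp
      calc volume E ≤ volume (E ∩ A m) + volume (E \ A m) := hsplit
        _ < ENNReal.ofReal (ε/2) + ENNReal.ofReal (ε/2) :=
            ENNReal.add_lt_add_of_le_of_lt (ne_of_lt (lt_of_le_of_lt hinter
              ENNReal.ofReal_lt_top)) hinter hdiff
        _ = ENNReal.ofReal ε := by
            rw [← ENNReal.ofReal_add (by linarith) (by linarith)]
            congr 1
            ring
    rw [hEvol] at hmain
    have hfin : ∑ i, (Yi i - Xi i) < ε :=
      (ENNReal.ofReal_lt_ofReal_iff hε).mp hmain
    calc ∑ i, |δ (y i) - δ (x i)| = ∑ i, (Yi i - Xi i) :=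
          Finset.sum_congr rfl fun i _ => abs_of_nonneg (sub_nonneg.mpr (hXYi i))
      _ < ε := hfin
  -- the a.e. differentiability statement for the inverse
  have haefinal : ∀ᵐ y ∂(volume.restrict (Icc (0:ℝ) 1)),
      ∃ d : ℝ, 0 < d ∧ HasDerivWithinAt γ d (Icc (0:ℝ) 1) (δ y) ∧
        HasDerivWithinAt δ (1 / d) (Icc (0:ℝ) 1) y := by
    have hNim : volume (γ '' N) = 0 := luzinN hac hNsub hNnull
    refine ae_restrict_of_null (measure_mono_null ?_
      (measure_union_null hNim
        ((Set.finite_singleton (1:ℝ) |>.insert 0).measure_zero volume)))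
    intro w hw
    obtain ⟨hwI, hwP⟩ := hw
    by_cases hwIoo : w ∈ Ioo (0:ℝ) 1
    swap
    · right
      simp only [mem_Icc] at hwI
      simp only [mem_Ioo, not_and_or, not_lt] at hwIoo
      simp only [mem_insert_iff, mem_singleton_iff]
      rcases hwIoo with hc | hc
      · left; linarith
      · right; linarith
    left
    have hδwN : δ w ∈ N := by
      by_contra hδwN
      apply hwP
      have hδwI : δ w ∈ Icc (0:ℝ) 1 := hδmap hwI
      have hgood : δ w ∈ Ioo (0:ℝ) 1 ∧ ∃ d, 0 < d ∧ HasDerivAt g d (δ w) := by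
        by_contra hbad
        exact hδwN ⟨hδwI, hbad⟩
      obtain ⟨hδwIoo, d, hd0, hgd⟩ := hgood
      refine ⟨d, hd0, ?_, ?_⟩
      · have : HasDerivAt γ d (δ w) :=
          hgd.congr_of_eventuallyEq ((hgeq (δ w) hδwIoo).symm)
        exact this.hasDerivWithinAt
      · have := hδderiv (δ w) d hd0 hgd
        rw [hge w] at this
        rw [one_div]
        exact this.hasDerivWithinAt
    refine ⟨δ w, hδwN, ?_⟩
    exact hγδ w hwI
  -- assemble
  refine ⟨δ, ⟨⟨hδac, hδmap, hδ0, hδ1, ?_⟩, ?_⟩,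
    fun t ht => ⟨hδγ t ht, hγδ t ht⟩, haefinal⟩
  · filter_upwards [haefinal] with w hw
    obtain ⟨d, hd0, _, hδd⟩ := hw
    exact ⟨1/d, hδd, by positivity⟩
  · filter_upwards [haefinal] with w hw
    obtain ⟨d, hd0, _, hδd⟩ := hw
    exact ⟨1/d, hδd, by positivity⟩

/-! ### composition -/

lemma comp_mem (γ₁ γ₂ : ℝ → ℝ) (h₁ : InGamma γ₁) (h₂ : InGamma γ₂) :
    InGamma (γ₁ ∘ γ₂) := by
  obtain ⟨hac₁, hmap₁, h01, h11, hd₁⟩ := h₁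
  obtain ⟨hac₂, hmap₂, h02, h12, hd₂⟩ := h₂
  have hmono₂ := monotoneOn_of_ac hac₂ hd₂
  have hmono₁ := monotoneOn_of_ac hac₁ hd₁
  have hmonoc : MonotoneOn (γ₁ ∘ γ₂) (Icc 0 1) := fun a ha b hb hab =>
    hmono₁ (hmap₂ ha) (hmap₂ hb) (hmono₂ ha hb hab)
  refine ⟨?_, hmap₁.comp hmap₂, ?_, ?_, mono_ae_deriv hmonoc⟩
  · intro ε hε
    obtain ⟨δ₁, hδ₁, H₁⟩ := hac₁ ε hε
    obtain ⟨δ₂, hδ₂, H₂⟩ := hac₂ δ₁ hδ₁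
    refine ⟨δ₂, hδ₂, fun n x y hxy hdisj hsum => ?_⟩
    set X : Fin n → ℝ := fun i => γ₂ (x i) with hXdef
    set Y : Fin n → ℝ := fun i => γ₂ (y i) with hYdef
    have hmemx : ∀ i, x i ∈ Icc (0:ℝ) 1 := fun i =>
      ⟨(hxy i).1, le_trans (hxy i).2.1 (hxy i).2.2⟩
    have hmemy : ∀ i, y i ∈ Icc (0:ℝ) 1 := fun i =>
      ⟨le_trans (hxy i).1 (hxy i).2.1, (hxy i).2.2⟩
    have hXY : ∀ i, 0 ≤ X i ∧ X i ≤ Y i ∧ Y i ≤ 1 := fun i =>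
      ⟨(hmap₂ (hmemx i)).1, hmono₂ (hmemx i) (hmemy i) (hxy i).2.1, (hmap₂ (hmemy i)).2⟩
    have hdisjX : ∀ i j, i ≠ j → Disjoint (Ioo (X i) (Y i)) (Ioo (X j) (Y j)) := by
      intro i j hij
      rw [Set.disjoint_left]
      intro w hw1 hw2
      have hxyi : x i < y i := by
        rcases lt_or_eq_of_le (hxy i).2.1 with hlt | heq
        · exact hlt
        · exfalso
          have : X i = Y i := by rw [hXdef, hYdef]; simp only; rw [heq]
          rw [← this] at hw1
          exact lt_irrefl w (lt_trans hw1.2 hw1.1)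
      have hxyj : x j < y j := by
        rcases lt_or_eq_of_le (hxy j).2.1 with hlt | heq
        · exact hlt
        · exfalso
          have : X j = Y j := by rw [hXdef, hYdef]; simp only; rw [heq]
          rw [← this] at hw2
          exact lt_irrefl w (lt_trans hw2.2 hw2.1)
      have horder : y i ≤ x j ∨ y j ≤ x i := by
        by_contra hcon
        push_neg at hcon
        obtain ⟨hc1, hc2⟩ := hcon
        have hlt : max (x i) (x j) < min (y i) (y j) := by
          rcases max_cases (x i) (x j) with ⟨he, _⟩ | ⟨he, _⟩ <;>
            rcases min_cases (y i) (y j) with ⟨he2, _⟩ | ⟨he2, _⟩ <;>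
            rw [he, he2] <;> linarith
        obtain ⟨w', hw'⟩ := nonempty_Ioo.mpr hlt
        have hw'i : w' ∈ Ioo (x i) (y i) :=
          ⟨lt_of_le_of_lt (le_max_left _ _) hw'.1, lt_of_lt_of_le hw'.2 (min_le_left _ _)⟩
        have hw'j : w' ∈ Ioo (x j) (y j) :=
          ⟨lt_of_le_of_lt (le_max_right _ _) hw'.1, lt_of_lt_of_le hw'.2 (min_le_right _ _)⟩
        exact Set.disjoint_left.mp (hdisj i j hij) hw'i hw'j
      rcases horder with hor | hor
      · have : Y i ≤ X j := hmono₂ (hmemy i) (hmemx j) hor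
        linarith [hw1.2, hw2.1]
      · have : Y j ≤ X i := hmono₂ (hmemy j) (hmemx i) hor
        linarith [hw2.2, hw1.1]
    have hsumX : ∑ i, (Y i - X i) < δ₁ := by
      have hlt := H₂ n x y hxy hdisj hsum
      have heq : ∀ i ∈ Finset.univ, (Y i - X i) = |γ₂ (y i) - γ₂ (x i)| := fun i _ =>
        (abs_of_nonneg (sub_nonneg.mpr (hmono₂ (hmemx i) (hmemy i) (hxy i).2.1))).symm
      rw [Finset.sum_congr rfl heq]
      exact hlt
    exact H₁ n X Y hXY hdisjX hsumX
  · simp only [Function.comp_apply, h02, h01]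
  · simp only [Function.comp_apply, h12, h11]

lemma comp_mem0 (γ₁ γ₂ : ℝ → ℝ) (h₁ : InGamma0 γ₁) (h₂ : InGamma0 γ₂) :
    InGamma0 (γ₁ ∘ γ₂) := by
  refine ⟨comp_mem γ₁ γ₂ h₁.1 h₂.1, ?_⟩
  obtain ⟨δ₂, hδ₂, hinv₂, hae₂⟩ := inverse_master γ₂ h₂
  obtain ⟨⟨hac₁, hmap₁, h01, h11, hdnn₁⟩, hdpos₁⟩ := h₁
  obtain ⟨⟨hac₂, hmap₂, h02, h12, hdnn₂⟩, hdpos₂⟩ := h₂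
  set N₁ : Set ℝ := {s | s ∈ Icc (0:ℝ) 1 ∧
    ¬ (s ∈ Ioo (0:ℝ) 1 ∧ ∃ d, 0 < d ∧ HasDerivAt γ₁ d s)} with hN₁def
  have hN₁null : volume N₁ = 0 := by
    refine null_of_ae_restrict ?_
    filter_upwards [hdpos₁, ae_restrict_mem_Ioo] with s hs h2
    obtain ⟨d, hdw, hd0⟩ := hs
    exact ⟨h2, d, hd0, hdw.hasDerivAt (Icc_mem_nhds h2.1 h2.2)⟩
  have hδ₂ac : AbsolutelyContinuousOn δ₂ 0 1 := hδ₂.1.1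
  have hpre : volume (δ₂ '' N₁) = 0 := luzinN hδ₂ac (fun s hs => hs.1) hN₁null
  have haeN : ∀ᵐ t ∂(volume.restrict (Icc (0:ℝ) 1)), t ∉ δ₂ '' N₁ :=
    ae_restrict_of_ae (measure_eq_zero_iff_ae_notMem.mp hpre)
  filter_upwards [hdpos₂, ae_restrict_mem_Ioo, haeN] with t ht2 htIoo htN
  obtain ⟨d₂, hd₂w, hd₂0⟩ := ht2
  have hd₂At : HasDerivAt γ₂ d₂ t := hd₂w.hasDerivAt (Icc_mem_nhds htIoo.1 htIoo.2)
  have hγ₂tN : γ₂ t ∉ N₁ := by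
    intro hmem
    exact htN ⟨γ₂ t, hmem, (hinv₂ t ⟨htIoo.1.le, htIoo.2.le⟩).1⟩
  have hγ₂tI : γ₂ t ∈ Icc (0:ℝ) 1 := hmap₂ ⟨htIoo.1.le, htIoo.2.le⟩
  have hgood : γ₂ t ∈ Ioo (0:ℝ) 1 ∧ ∃ d, 0 < d ∧ HasDerivAt γ₁ d (γ₂ t) := by
    by_contra hbad
    exact hγ₂tN ⟨hγ₂tI, hbad⟩
  obtain ⟨_, d₁, hd₁0, hd₁At⟩ := hgood
  exact ⟨d₁ * d₂, (hd₁At.comp t hd₂At).hasDerivWithinAt, mul_pos hd₁0 hd₂0⟩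

end GammaAux

/-- `Γ` is closed under composition; `Γ₀` is a group under composition: it is closed
under composition and every `γ ∈ Γ₀` has an inverse `δ ∈ Γ₀` which satisfies
`δ' = 1/(γ' ∘ δ)` a.e. on `[0,1]`. -/
theorem gamma_semigroup_gamma0_group :
    (∀ γ₁ γ₂ : ℝ → ℝ, InGamma γ₁ → InGamma γ₂ → InGamma (γ₁ ∘ γ₂)) ∧
    (∀ γ₁ γ₂ : ℝ → ℝ, InGamma0 γ₁ → InGamma0 γ₂ → InGamma0 (γ₁ ∘ γ₂)) ∧
    (∀ γ : ℝ → ℝ, InGamma0 γ → ∃ δ : ℝ → ℝ, InGamma0 δ ∧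
      (∀ t ∈ Icc (0:ℝ) 1, δ (γ t) = t ∧ γ (δ t) = t) ∧
      ∀ᵐ y ∂(volume.restrict (Icc (0:ℝ) 1)),
        ∃ d : ℝ, HasDerivWithinAt γ d (Icc (0:ℝ) 1) (δ y) ∧
          HasDerivWithinAt δ (1 / d) (Icc (0:ℝ) 1) y) := by
  refine ⟨GammaAux.comp_mem, GammaAux.comp_mem0, fun γ hγ => ?_⟩
  obtain ⟨δ, hδ, hinv, hae⟩ := GammaAux.inverse_master γ hγ
  exact ⟨δ, hδ, hinv, hae.mono fun y ⟨d, hd0, h1, h2⟩ => ⟨d, h1, h2⟩⟩
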